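/- Let X be a paracompact, locally compact Hausdorff space. Then the following are equivalent: (a) X is a J-space; (b) every closed continuous map f : X → Y onto a non-compact, locally compact Hausdorff space Y is perfect; (c) every closed continuous map f : X → Y onto a locally compact Hausdorff space Y has at most one non-compact fiber (i.e., at most one y ∈ Y with f⁻¹(y) not compact). -/

import Mathlib

open Set Topology
set_option linter.unusedSectionVars false

universe u

/-- A Hausdorff space `X` is a *J-space* if whenever `A`, `B` are closed sets with
`A ∪ B = X` and `A ∩ B` compact, then `A` or `B` is compact. -/
def IsJSpace (X : Type*) [TopologicalSpace X] : Prop :=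
  ∀ A B : Set X, IsClosed A → IsClosed B → A ∪ B = Set.univ →
    IsCompact (A ∩ B) → IsCompact A ∨ IsCompact B

/-- A Hausdorff space `X` is a *strong J-space* if every compact `K ⊆ X` is contained in
a compact `L ⊆ X` with `X \ L` connected (the empty set counting as connected). -/
def IsStrongJSpace (X : Type*) [TopologicalSpace X] : Prop :=
  ∀ K : Set X, IsCompact K → ∃ L : Set X, IsCompact L ∧ K ⊆ L ∧ IsPreconnected Lᶜ

/-- A map is *perfect* if it is closed and all fibers are compact. -/
def IsPerfectMap {X Y : Type*} [TopologicalSpace X] [TopologicalSpace Y] (f : X → Y) : Prop :=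
  IsClosedMap f ∧ ∀ y : Y, IsCompact (f ⁻¹' {y})

/-- A map is *boundary-perfect* if it is closed and the topological boundary of each
fiber is compact. -/
def IsBoundaryPerfectMap {X Y : Type*} [TopologicalSpace X] [TopologicalSpace Y]
    (f : X → Y) : Prop :=
  IsClosedMap f ∧ ∀ y : Y, IsCompact (frontier (f ⁻¹' {y}))

section Collapse
variable {α : Type u} [TopologicalSpace α]

/-- The setoid collapsing a set `A` to a single point. -/
def collapseSetoid (A : Set α) : Setoid α :=
  ⟨fun x y => x = y ∨ (x ∈ A ∧ y ∈ A), by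
    constructor
    · exact fun x => Or.inl rfl
    · rintro x y (rfl | ⟨hx, hy⟩)
      · exact Or.inl rfl
      · exact Or.inr ⟨hy, hx⟩
    · rintro x y z (rfl | ⟨hx, hy⟩) (rfl | ⟨hy', hz⟩)
      · exact Or.inl rfl
      · exact Or.inr ⟨hy', hz⟩
      · exact Or.inr ⟨hx, hy⟩
      · exact Or.inr ⟨hx, hz⟩⟩

/-- The space obtained from `α` by collapsing `A` to a point. -/
def CollapseSpace (A : Set α) : Type u := Quotient (collapseSetoid A)

instance (A : Set α) : TopologicalSpace (CollapseSpace A) :=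
  instTopologicalSpaceQuotient

/-- The quotient map. -/
def cq (A : Set α) : α → CollapseSpace A := Quotient.mk (collapseSetoid A)

variable (A : Set α)

lemma cq_isQuotientMap : IsQuotientMap (cq A) := isQuotientMap_quot_mk

lemma cq_continuous : Continuous (cq A) := (cq_isQuotientMap A).continuous

lemma cq_surjective : Function.Surjective (cq A) := (cq_isQuotientMap A).surjective

lemma cq_eq_iff {x y : α} : cq A x = cq A y ↔ (x = y ∨ (x ∈ A ∧ y ∈ A)) :=
  ⟨fun h => Quotient.exact h, fun h => Quotient.sound h⟩

lemma cq_preimage_image_of_inter_empty {S : Set α} (h : S ∩ A = ∅) :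
    cq A ⁻¹' (cq A '' S) = S := by
  ext x
  simp only [mem_preimage, mem_image]
  constructor
  · rintro ⟨s, hs, hsx⟩
    rcases (cq_eq_iff A).1 hsx with rfl | ⟨hsA, hxA⟩
    · exact hs
    · exact absurd hsA (by simp only [eq_empty_iff_forall_notMem, mem_inter_iff, not_and] at h; exact h s hs)
  · exact fun hx => ⟨x, hx, rfl⟩

lemma cq_preimage_image_of_subset {S : Set α} (h : A ⊆ S) :
    cq A ⁻¹' (cq A '' S) = S := by
  ext x
  simp only [mem_preimage, mem_image]
  constructor
  · rintro ⟨s, hs, hsx⟩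
    rcases (cq_eq_iff A).1 hsx with rfl | ⟨_, hxA⟩
    · exact hs
    · exact h hxA
  · exact fun hx => ⟨x, hx, rfl⟩

lemma cq_isClosedMap (hA : IsClosed A) : IsClosedMap (cq A) := by
  intro C hC
  rw [← (cq_isQuotientMap A).isClosed_preimage]
  by_cases h : (C ∩ A).Nonempty
  · have : cq A ⁻¹' (cq A '' C) = C ∪ A := by
      ext x
      simp only [mem_preimage, mem_image, mem_union]
      constructor
      · rintro ⟨s, hs, hsx⟩
        rcases (cq_eq_iff A).1 hsx with rfl | ⟨_, hxA⟩
        · exact Or.inl hs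
        · exact Or.inr hxA
      · rintro (hx | hx)
        · exact ⟨x, hx, rfl⟩
        · obtain ⟨c, hcC, hcA⟩ := h
          exact ⟨c, hcC, (cq_eq_iff A).2 (Or.inr ⟨hcA, hx⟩)⟩
    rw [this]; exact hC.union hA
  · rw [cq_preimage_image_of_inter_empty A (not_nonempty_iff_eq_empty.1 h)]
    exact hC

lemma cq_isOpen_image {O : Set α} (hO : IsOpen O) (hsat : A ⊆ O ∨ O ∩ A = ∅) :
    IsOpen (cq A '' O) := by
  rw [← (cq_isQuotientMap A).isOpen_preimage]
  rcases hsat with h | h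
  · rw [cq_preimage_image_of_subset A h]; exact hO
  · rw [cq_preimage_image_of_inter_empty A h]; exact hO

lemma cq_image_disjoint {U V : Set α} (hV : V ∩ A = ∅) (hUV : U ∩ V = ∅) :
    cq A '' U ∩ cq A '' V = ∅ := by
  rw [eq_empty_iff_forall_notMem]
  rintro z ⟨⟨u, hu, rfl⟩, ⟨v, hv, hvu⟩⟩
  rcases (cq_eq_iff A).1 hvu with rfl | ⟨hvA, huA⟩
  · exact absurd hv (by simp only [eq_empty_iff_forall_notMem, mem_inter_iff, not_and] at hUV; exact hUV v hu)
  · exact absurd hvA (by simp only [eq_empty_iff_forall_notMem, mem_inter_iff, not_and] at hV; exact hV v hv)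

lemma cq_fiber_of_mem {a : α} (ha : a ∈ A) : cq A ⁻¹' {cq A a} = A := by
  ext x
  simp only [mem_preimage, mem_singleton_iff]
  constructor
  · intro h
    rcases (cq_eq_iff A).1 h with rfl | ⟨hx, _⟩
    · exact ha
    · exact hx
  · exact fun hx => (cq_eq_iff A).2 (Or.inr ⟨hx, ha⟩)

lemma cq_fiber_of_not_mem {a : α} (ha : a ∉ A) : cq A ⁻¹' {cq A a} = {a} := by
  ext x
  simp only [mem_preimage, mem_singleton_iff]
  constructor
  · intro h
    rcases (cq_eq_iff A).1 h with rfl | ⟨_, haA⟩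
    · rfl
    · exact absurd haA ha
  · rintro rfl; rfl

lemma cq_ne {a b : α} (ha : a ∈ A) (hb : b ∉ A) : cq A a ≠ cq A b := by
  intro h
  rcases (cq_eq_iff A).1 h with rfl | ⟨_, hbA⟩
  · exact hb ha
  · exact hb hbA

end Collapse

section Collapse2
variable {α : Type u} [TopologicalSpace α] [T2Space α] [LocallyCompactSpace α]
variable (A : Set α)

/-- In a locally compact Hausdorff space, a point can be separated from a closed set
by disjoint open sets. -/
lemma lch_point_closed_sep (hA : IsClosed A) {x : α} (hx : x ∉ A) :
    ∃ U V : Set α, IsOpen U ∧ IsOpen V ∧ x ∈ U ∧ A ⊆ V ∧ U ∩ V = ∅ := by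
  obtain ⟨K, hK, hxK, hKA⟩ := exists_compact_subset hA.isOpen_compl hx
  refine ⟨interior K, Kᶜ, isOpen_interior, hK.isClosed.isOpen_compl, hxK, ?_, ?_⟩
  · intro a ha
    simp only [mem_compl_iff]
    exact fun haK => hKA haK ha
  · rw [eq_empty_iff_forall_notMem]
    rintro z ⟨hz1, hz2⟩
    exact hz2 (interior_subset hz1)

lemma collapse_t2 (hA : IsClosed A) : T2Space (CollapseSpace A) := by
  constructor
  intro z1 z2 hne
  induction z1 using Quotient.ind with
  | _ x =>
  induction z2 using Quotient.ind with
  | _ y =>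
  have hxy : ¬(x = y ∨ (x ∈ A ∧ y ∈ A)) := fun h => hne (Quotient.sound h)
  push_neg at hxy
  obtain ⟨hne', hAA⟩ := hxy
  by_cases hx : x ∈ A
  · have hy : y ∉ A := fun hy => hAA hx hy
    obtain ⟨U, V, hU, hV, hyU, hAV, hUV⟩ := lch_point_closed_sep A hA hy
    refine ⟨cq A '' V, cq A '' U, cq_isOpen_image A hV (Or.inl hAV),
      cq_isOpen_image A hU (Or.inr ?_), ⟨x, hAV hx, rfl⟩, ⟨y, hyU, rfl⟩, ?_⟩
    · rw [eq_empty_iff_forall_notMem]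
      rintro z ⟨hz1, hz2⟩
      rw [eq_empty_iff_forall_notMem] at hUV
      exact hUV z ⟨hz1, hAV hz2⟩
    · rw [Set.disjoint_iff_inter_eq_empty]
      apply cq_image_disjoint
      · rw [eq_empty_iff_forall_notMem]; rintro z ⟨hz1, hz2⟩
        rw [eq_empty_iff_forall_notMem] at hUV
        exact hUV z ⟨hz1, hAV hz2⟩
      · rw [eq_empty_iff_forall_notMem]; rintro z ⟨hz1, hz2⟩
        rw [eq_empty_iff_forall_notMem] at hUV
        exact hUV z ⟨hz2, hz1⟩
  · by_cases hy : y ∈ A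
    · obtain ⟨U, V, hU, hV, hxU, hAV, hUV⟩ := lch_point_closed_sep A hA hx
      refine ⟨cq A '' U, cq A '' V, cq_isOpen_image A hU (Or.inr ?_),
        cq_isOpen_image A hV (Or.inl hAV), ⟨x, hxU, rfl⟩, ⟨y, hAV hy, rfl⟩, ?_⟩
      · rw [eq_empty_iff_forall_notMem]; rintro z ⟨hz1, hz2⟩
        rw [eq_empty_iff_forall_notMem] at hUV
        exact hUV z ⟨hz1, hAV hz2⟩
      · rw [Set.disjoint_iff_inter_eq_empty]
        rw [inter_comm]
        apply cq_image_disjoint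
        · rw [eq_empty_iff_forall_notMem]; rintro z ⟨hz1, hz2⟩
          rw [eq_empty_iff_forall_notMem] at hUV
          exact hUV z ⟨hz1, hAV hz2⟩
        · rw [eq_empty_iff_forall_notMem]; rintro z ⟨hz1, hz2⟩
          rw [eq_empty_iff_forall_notMem] at hUV
          exact hUV z ⟨hz2, hz1⟩
    · have hxyne : x ≠ y := fun h => hne' h
      obtain ⟨U, V, hU, hV, hxU, hyV, hUV⟩ := t2_separation hxyne
      refine ⟨cq A '' (U ∩ Aᶜ), cq A '' (V ∩ Aᶜ),
        cq_isOpen_image A (hU.inter hA.isOpen_compl) (Or.inr ?_),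
        cq_isOpen_image A (hV.inter hA.isOpen_compl) (Or.inr ?_),
        ⟨x, ⟨hxU, hx⟩, rfl⟩, ⟨y, ⟨hyV, hy⟩, rfl⟩, ?_⟩
      · rw [eq_empty_iff_forall_notMem]; rintro z ⟨⟨_, hz2⟩, hz3⟩; exact hz2 hz3
      · rw [eq_empty_iff_forall_notMem]; rintro z ⟨⟨_, hz2⟩, hz3⟩; exact hz2 hz3
      · rw [Set.disjoint_iff_inter_eq_empty]
        apply cq_image_disjoint
        · rw [eq_empty_iff_forall_notMem]; rintro z ⟨⟨_, hz2⟩, hz3⟩; exact hz2 hz3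
        · rw [eq_empty_iff_forall_notMem]; rintro z ⟨⟨hz1, _⟩, ⟨hz2, _⟩⟩
          exact hUV.ne_of_mem hz1 hz2 rfl

lemma collapse_wlc (hA : IsClosed A) {M O : Set α} (hM : IsCompact M) (hO : IsOpen O)
    (hAO : A ⊆ O) (hOM : O ⊆ A ∪ M) : WeaklyLocallyCompactSpace (CollapseSpace A) := by
  constructor
  intro z
  induction z using Quotient.ind with
  | _ x =>
  by_cases hx : x ∈ A
  · have hAimg : cq A '' A = {cq A x} := by
      apply Subset.antisymm
      · rintro _ ⟨a, ha, rfl⟩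
        exact mem_singleton_iff.2 ((cq_eq_iff A).2 (Or.inr ⟨ha, hx⟩))
      · rintro z hz
        rw [mem_singleton_iff] at hz
        exact ⟨x, hx, hz ▸ rfl⟩
    refine ⟨cq A '' (A ∪ M), ?_, ?_⟩
    · rw [image_union, hAimg, singleton_union]
      exact (hM.image (cq_continuous A)).insert _
    · show cq A '' (A ∪ M) ∈ 𝓝 (cq A x)
      rw [mem_nhds_iff]
      exact ⟨cq A '' O, image_mono hOM, cq_isOpen_image A hO (Or.inl hAO),
        ⟨x, hAO hx, rfl⟩⟩
  · obtain ⟨K, hK, hxK, hKA⟩ := exists_compact_subset hA.isOpen_compl hx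
    refine ⟨cq A '' K, hK.image (cq_continuous A), ?_⟩
    show cq A '' K ∈ 𝓝 (cq A x)
    rw [mem_nhds_iff]
    refine ⟨cq A '' interior K, image_mono interior_subset,
      cq_isOpen_image A isOpen_interior (Or.inr ?_), ⟨x, hxK, rfl⟩⟩
    rw [eq_empty_iff_forall_notMem]
    rintro z ⟨hz1, hz2⟩
    exact hKA (interior_subset hz1) hz2

/-- Compactness can be transported back from the collapse along sets missing `A`. -/
lemma collapse_isCompact_of_image (hA : IsClosed A) {S : Set α} (hSA : S ∩ A = ∅)
    (h : IsCompact (cq A '' S)) : IsCompact S := by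
  refine isCompact_of_finite_subcover fun U hU hcov => ?_
  have hSnA : ∀ s ∈ S, s ∉ A := by
    intro s hs hsA
    rw [eq_empty_iff_forall_notMem] at hSA
    exact hSA s ⟨hs, hsA⟩
  have hop : ∀ i, IsOpen (cq A '' (U i ∩ Aᶜ)) := fun i =>
    cq_isOpen_image A ((hU i).inter hA.isOpen_compl) (Or.inr (by
      rw [eq_empty_iff_forall_notMem]; rintro z ⟨⟨_, hz2⟩, hz3⟩; exact hz2 hz3))
  have hcov2 : cq A '' S ⊆ ⋃ i, cq A '' (U i ∩ Aᶜ) := by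
    rintro _ ⟨s, hs, rfl⟩
    obtain ⟨i, hi⟩ := mem_iUnion.1 (hcov hs)
    exact mem_iUnion.2 ⟨i, ⟨s, ⟨hi, hSnA s hs⟩, rfl⟩⟩
  obtain ⟨t, ht⟩ := h.elim_finite_subcover (fun i => cq A '' (U i ∩ Aᶜ)) hop hcov2
  refine ⟨t, fun s hs => ?_⟩
  obtain ⟨i, hit, u, ⟨huU, huA⟩, hq⟩ := by
    simpa only [mem_iUnion, mem_image] using ht ⟨s, hs, rfl⟩
  rcases (cq_eq_iff A).1 hq with rfl | ⟨huA', _⟩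
  · exact mem_iUnion.2 ⟨i, mem_iUnion.2 ⟨hit, huU⟩⟩
  · exact absurd huA' huA

end Collapse2

section Lemmas
variable {X : Type u} {Y : Type*} [TopologicalSpace X] [TopologicalSpace Y]

/-- A selection of points escaping a compact exhaustion is closed. -/
lemma escape_isClosed [T1Space X] (K : CompactExhaustion X) {p : ℕ → X}
    (hp : ∀ n, p n ∉ K n) (s : Set ℕ) : IsClosed (p '' s) := by
  rw [← closure_subset_iff_isClosed]
  intro t ht
  obtain ⟨n, hn⟩ := K.exists_mem t
  have htm : t ∈ interior (K (n + 1)) := K.subset_interior_succ n hn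
  have hsets : s = (s ∩ {k | k < n + 1}) ∪ (s ∩ {k | n + 1 ≤ k}) := by
    ext k
    constructor
    · intro hk
      rcases lt_or_ge k (n + 1) with h | h
      · exact mem_union_left _ ⟨hk, h⟩
      · exact mem_union_right _ ⟨hk, h⟩
    · rintro (⟨hk, _⟩ | ⟨hk, _⟩) <;> exact hk
  have hsplit : p '' s = p '' (s ∩ {k | k < n + 1}) ∪ p '' (s ∩ {k | n + 1 ≤ k}) := by
    rw [← image_union, ← hsets]
  rw [hsplit, closure_union] at ht
  rcases (mem_union _ _ _).1 ht with h | h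
  · have hfin : (p '' (s ∩ {k | k < n + 1})).Finite :=
      Set.Finite.image _ ((finite_Iio (n + 1)).subset inter_subset_right)
    rw [hfin.isClosed.closure_eq] at h
    exact image_mono inter_subset_left h
  · exfalso
    rw [mem_closure_iff] at h
    obtain ⟨z, hz1, hz2⟩ := h (interior (K (n + 1))) isOpen_interior htm
    obtain ⟨k, ⟨_, hk2⟩, rfl⟩ := hz2
    exact hp k (K.subset hk2 (interior_subset hz1))

/-- An infinite subset of a compact set has an accumulation point. -/
lemma exists_acc_point {C S : Set Y} (hC : IsCompact C) (hS : S ⊆ C) (hinf : S.Infinite) :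
    ∃ t ∈ C, t ∈ closure (S \ {t}) := by
  by_contra h
  push_neg at h
  have hsep : ∀ t : Y, t ∈ C → ∃ N : Set Y, IsOpen N ∧ t ∈ N ∧ N ∩ (S \ {t}) = ∅ := by
    intro t ht
    have := h t ht
    rw [mem_closure_iff] at this
    push_neg at this
    obtain ⟨N, hN1, hN2, hN3⟩ := this
    exact ⟨N, hN1, hN2, hN3⟩
  choose! N hN1 hN2 hN3 using hsep
  obtain ⟨T, hTC, hTcov⟩ := hC.elim_nhds_subcover N (fun t ht => (hN1 t ht).mem_nhds (hN2 t ht))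
  apply hinf
  apply T.finite_toSet.subset
  intro x hx
  obtain ⟨t, ht, hxt⟩ := by
    simpa only [mem_iUnion, exists_prop] using hTcov (hS hx)
  have : x = t := by
    by_contra hne
    have : x ∈ N t ∩ (S \ {t}) := ⟨hxt, hx, hne⟩
    rw [hN3 t (hTC t ht)] at this
    exact this
  exact this ▸ ht

/-- The preimage of a compact set all of whose fibers are compact, under a closed map,
is compact. -/
lemma isCompact_preimage_of_closedMap {f : X → Y} (hcl : IsClosedMap f)
    {D : Set Y} (hD : IsCompact D) (hfib : ∀ y ∈ D, IsCompact (f ⁻¹' {y})) :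
    IsCompact (f ⁻¹' D) := by
  classical
  refine isCompact_of_finite_subcover fun U hU hcov => ?_
  have hfibcov : ∀ y : Y, y ∈ D → ∃ s : Finset _, f ⁻¹' {y} ⊆ ⋃ i ∈ s, U i := by
    intro y hy
    refine (hfib y hy).elim_finite_subcover U hU (Subset.trans ?_ hcov)
    intro x hx
    rw [mem_preimage, mem_singleton_iff] at hx
    rw [mem_preimage, hx]
    exact hy
  choose! s hs using hfibcov
  set V : Y → Set Y := fun y => (f '' (⋃ i ∈ s y, U i)ᶜ)ᶜ with hV
  have hVnhds : ∀ y ∈ D, V y ∈ 𝓝 y := by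
    intro y hy
    have hopen : IsOpen (V y) :=
      (hcl _ (isClosed_compl_iff.2 (isOpen_biUnion fun i _ => hU i))).isOpen_compl
    refine hopen.mem_nhds ?_
    rw [hV, mem_compl_iff]
    rintro ⟨x, hx1, hx2⟩
    exact hx1 (hs y hy (by rw [mem_preimage, hx2]; rfl))
  obtain ⟨T, hTD, hTcov⟩ := hD.elim_nhds_subcover V hVnhds
  refine ⟨T.biUnion s, fun x hx => ?_⟩
  obtain ⟨y, hyT, hxy⟩ := by
    simpa only [mem_iUnion, exists_prop] using hTcov hx
  have hxy' : f x ∉ f '' (⋃ i ∈ s y, U i)ᶜ := hxy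
  have hxO : x ∈ ⋃ i ∈ s y, U i := by
    by_contra hxO
    exact hxy' (mem_image_of_mem f hxO)
  obtain ⟨i, hi, hxi⟩ := by simpa only [mem_iUnion, exists_prop] using hxO
  exact mem_iUnion.2 ⟨i, mem_iUnion.2 ⟨Finset.mem_biUnion.2 ⟨y, hyT, hi⟩, hxi⟩⟩

end Lemmas

/-- A closed continuous map from a σ-compact, locally compact space has only finitely
many non-compact fibers over any compact set. -/
lemma finite_noncompact_fibers {X : Type u} {Y : Type*} [TopologicalSpace X]
    [TopologicalSpace Y] [T1Space X] [T1Space Y] [WeaklyLocallyCompactSpace X]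
    [SigmaCompactSpace X] {f : X → Y} (hf : Continuous f) (hcl : IsClosedMap f)
    {C : Set Y} (hC : IsCompact C) : {y | y ∈ C ∧ ¬IsCompact (f ⁻¹' {y})}.Finite := by
  by_contra hinf
  rw [← Set.Infinite] at hinf
  set S := {y | y ∈ C ∧ ¬IsCompact (f ⁻¹' {y})} with hS
  have hSC : S ⊆ C := fun y hy => hy.1
  let e : ℕ ↪ ↥S := hinf.natEmbedding _
  let D : ℕ → Y := fun n => (e n : Y)
  have hDinj : Function.Injective D := fun m n h => e.injective (Subtype.ext h)
  have hDS : ∀ n, D n ∈ S := fun n => (e n).2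
  have hDrange : range D ⊆ C := by rintro _ ⟨n, rfl⟩; exact hSC (hDS n)
  have hDinf : (range D).Infinite := infinite_range_of_injective hDinj
  obtain ⟨t, htC, htacc⟩ := exists_acc_point hC hDrange hDinf
  let K := CompactExhaustion.choice X
  have hfiber : ∀ n : ℕ, ∃ x, x ∈ f ⁻¹' {D n} ∧ x ∉ K n := by
    intro n
    by_contra hall
    push_neg at hall
    have hsub : f ⁻¹' {D n} ⊆ K n := fun x hx => hall x hx
    have hclosed : IsClosed (f ⁻¹' {D n}) := isClosed_singleton.preimage hf
    exact (hDS n).2 ((K.isCompact n).of_isClosed_subset hclosed hsub)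
  choose p hp1 hp2 using hfiber
  have hfp : ∀ n, f (p n) = D n := by
    intro n
    have := hp1 n
    rwa [mem_preimage, mem_singleton_iff] at this
  have hPclosed : IsClosed (p '' {n | D n ≠ t}) := escape_isClosed K hp2 _
  have himgclosed : IsClosed (f '' (p '' {n | D n ≠ t})) := hcl _ hPclosed
  have himg : f '' (p '' {n | D n ≠ t}) = range D \ {t} := by
    ext y
    constructor
    · rintro ⟨_, ⟨n, hn, rfl⟩, rfl⟩
      rw [hfp n]
      exact ⟨⟨n, rfl⟩, hn⟩
    · rintro ⟨⟨n, rfl⟩, hy⟩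
      have hn : D n ≠ t := hy
      exact ⟨p n, ⟨n, hn, rfl⟩, hfp n⟩
  have : t ∈ range D \ {t} := by
    rw [← himg, ← himgclosed.closure_eq]
    exact closure_mono (by rw [himg]) htacc
  exact this.2 rfl

section Sigma
variable {X : Type u} [TopologicalSpace X]

/-- Chain neighborhoods with respect to a cover `v`. -/
def chainW (v : X → Set X) : ℕ → X → Set X
  | 0, x => ⋃ j ∈ {j | x ∈ v j}, v j
  | (n+1), x => ⋃ j ∈ {j | (v j ∩ chainW v n x).Nonempty}, v j

variable {v : X → Set X}

lemma chainW_isOpen (hv : ∀ j, IsOpen (v j)) (n : ℕ) (x : X) : IsOpen (chainW v n x) := by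
  cases n <;> exact isOpen_biUnion fun j _ => hv j

lemma chainW_zero_mem (hcov : ⋃ j, v j = univ) (x : X) : x ∈ chainW v 0 x := by
  have : x ∈ ⋃ j, v j := hcov ▸ mem_univ x
  obtain ⟨j, hj⟩ := mem_iUnion.1 this
  exact mem_biUnion hj hj

lemma chainW_mono (n : ℕ) (x : X) : chainW v n x ⊆ chainW v (n + 1) x := by
  induction n with
  | zero =>
    intro y hy
    obtain ⟨j, hj, hyj⟩ := by simpa only [chainW, mem_iUnion, exists_prop] using hy
    exact mem_biUnion (show (v j ∩ chainW v 0 x).Nonempty from ⟨y, hyj, hy⟩) hyj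
  | succ n ih =>
    intro y hy
    obtain ⟨j, hj, hyj⟩ := by simpa only [chainW, mem_iUnion, exists_prop] using hy
    obtain ⟨z, hz1, hz2⟩ := hj
    exact mem_biUnion (show (v j ∩ chainW v (n+1) x).Nonempty from
      ⟨z, hz1, ih hz2⟩) hyj

lemma chainW_compact_closure (hv : ∀ j, IsOpen (v j)) (hlf : LocallyFinite v)
    (hcpt : ∀ j, IsCompact (closure (v j))) (n : ℕ) (x : X) :
    IsCompact (closure (chainW v n x)) := by
  induction n with
  | zero =>
    have hfin : {j | x ∈ v j}.Finite := hlf.point_finite x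
    have hsub : chainW v 0 x ⊆ ⋃ j ∈ {j | x ∈ v j}, closure (v j) :=
      iUnion₂_mono fun j _ => subset_closure
    have hT : IsCompact (⋃ j ∈ {j | x ∈ v j}, closure (v j)) :=
      hfin.isCompact_biUnion fun j _ => hcpt j
    have hTc : IsClosed (⋃ j ∈ {j | x ∈ v j}, closure (v j)) :=
      hfin.isClosed_biUnion fun j _ => isClosed_closure
    exact hT.of_isClosed_subset isClosed_closure (closure_minimal hsub hTc)
  | succ n ih =>
    have hfin : {j | (v j ∩ chainW v n x).Nonempty}.Finite := by
      refine (hlf.finite_nonempty_inter_compact ih).subset ?_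
      intro j hj
      exact hj.mono (inter_subset_inter_right _ subset_closure)
    have hsub : chainW v (n+1) x ⊆ ⋃ j ∈ {j | (v j ∩ chainW v n x).Nonempty}, closure (v j) :=
      iUnion₂_mono fun j _ => subset_closure
    have hT : IsCompact (⋃ j ∈ {j | (v j ∩ chainW v n x).Nonempty}, closure (v j)) :=
      hfin.isCompact_biUnion fun j _ => hcpt j
    have hTc : IsClosed (⋃ j ∈ {j | (v j ∩ chainW v n x).Nonempty}, closure (v j)) :=
      hfin.isClosed_biUnion fun j _ => isClosed_closure
    exact hT.of_isClosed_subset isClosed_closure (closure_minimal hsub hTc)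

/-- The chain component of `x`. -/
def chainG (v : X → Set X) (x : X) : Set X := ⋃ n, chainW v n x

lemma chainG_isOpen (hv : ∀ j, IsOpen (v j)) (x : X) : IsOpen (chainG v x) :=
  isOpen_iUnion fun n => chainW_isOpen hv n x

lemma chainG_mem (hcov : ⋃ j, v j = univ) (x : X) : x ∈ chainG v x :=
  mem_iUnion.2 ⟨0, chainW_zero_mem hcov x⟩

lemma chainW_subset_chainG (n : ℕ) (x : X) : chainW v n x ⊆ chainG v x :=
  subset_iUnion (fun n => chainW v n x) n

lemma chainG_isClosed (hv : ∀ j, IsOpen (v j)) (hcov : ⋃ j, v j = univ) (x : X) :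
    IsClosed (chainG v x) := by
  rw [← closure_subset_iff_isClosed]
  intro t ht
  have : t ∈ ⋃ j, v j := hcov ▸ mem_univ t
  obtain ⟨j, hj⟩ := mem_iUnion.1 this
  rw [mem_closure_iff] at ht
  obtain ⟨z, hz1, hz2⟩ := ht (v j) (hv j) hj
  obtain ⟨n, hzn⟩ := mem_iUnion.1 hz2
  have : t ∈ chainW v (n + 1) x :=
    mem_biUnion (show (v j ∩ chainW v n x).Nonempty from ⟨z, hz1, hzn⟩) hj
  exact chainW_subset_chainG (n + 1) x this

lemma chainW_shift {m : ℕ} {x w : X} (hw : w ∈ chainW v m x) :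
    ∀ k, chainW v k w ⊆ chainW v (m + k + 1) x := by
  intro k
  induction k with
  | zero =>
    intro y hy
    obtain ⟨j, hj, hyj⟩ := by simpa only [chainW, mem_iUnion, exists_prop] using hy
    exact mem_biUnion (show (v j ∩ chainW v m x).Nonempty from ⟨w, hj, hw⟩) hyj
  | succ k ih =>
    intro y hy
    obtain ⟨j, hj, hyj⟩ := by simpa only [chainW, mem_iUnion, exists_prop] using hy
    obtain ⟨z, hz1, hz2⟩ := hj
    exact mem_biUnion (show (v j ∩ chainW v (m + k + 1) x).Nonempty from
      ⟨z, hz1, ih hz2⟩) hyj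

lemma chainG_shift {x w : X} (hw : w ∈ chainG v x) : chainG v w ⊆ chainG v x := by
  obtain ⟨m, hm⟩ := mem_iUnion.1 hw
  intro y hy
  obtain ⟨k, hk⟩ := mem_iUnion.1 hy
  exact chainW_subset_chainG (m + k + 1) x (chainW_shift hm k hk)

lemma chainW_symm (hcov : ⋃ j, v j = univ) {x : X} :
    ∀ n, ∀ y ∈ chainW v n x, x ∈ chainG v y := by
  intro n
  induction n with
  | zero =>
    intro y hy
    obtain ⟨j, hj, hyj⟩ := by simpa only [chainW, mem_iUnion, exists_prop] using hy
    have : x ∈ chainW v 0 y := mem_biUnion (show y ∈ v j from hyj) hj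
    exact chainW_subset_chainG 0 y this
  | succ n ih =>
    intro y hy
    obtain ⟨j, hj, hyj⟩ := by simpa only [chainW, mem_iUnion, exists_prop] using hy
    obtain ⟨z, hz1, hz2⟩ := hj
    have hxGz : x ∈ chainG v z := ih z hz2
    have hzW0y : z ∈ chainW v 0 y := mem_biUnion (show y ∈ v j from hyj) hz1
    exact chainG_shift (chainW_subset_chainG 0 y hzW0y) hxGz

lemma chainG_eq_of_mem (hcov : ⋃ j, v j = univ) {x y : X} (hy : y ∈ chainG v x) :
    chainG v y = chainG v x := by
  apply Subset.antisymm (chainG_shift hy)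
  obtain ⟨n, hn⟩ := mem_iUnion.1 hy
  exact chainG_shift (chainW_symm hcov n y hn)

lemma chainG_sigmaCompact (hv : ∀ j, IsOpen (v j)) (hlf : LocallyFinite v)
    (hcpt : ∀ j, IsCompact (closure (v j))) (hcov : ⋃ j, v j = univ) (x : X) :
    IsSigmaCompact (chainG v x) := by
  refine ⟨fun n => closure (chainW v n x), fun n => chainW_compact_closure hv hlf hcpt n x, ?_⟩
  apply Subset.antisymm
  · refine iUnion_subset fun n => ?_
    rw [← (chainG_isClosed hv hcov x).closure_eq]
    exact closure_mono (chainW_subset_chainG n x)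
  · exact iUnion_mono fun n => subset_closure

end Sigma

/-- A paracompact, locally compact J-space is σ-compact. -/
lemma IsJSpace.sigmaCompactSpace {X : Type u} [TopologicalSpace X] [T2Space X]
    [ParacompactSpace X] [LocallyCompactSpace X] (hJ : IsJSpace X) :
    SigmaCompactSpace X := by
  classical
  have h1 : ∀ x : X, ∃ K : Set X, IsCompact K ∧ K ∈ 𝓝 x := fun x => exists_compact_mem_nhds x
  choose Kc hKc hKn using h1
  have hu_open : ∀ x : X, IsOpen (interior (Kc x)) := fun x => isOpen_interior
  have hu_cov : ⋃ x, interior (Kc x) = univ := by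
    rw [eq_univ_iff_forall]
    intro x
    exact mem_iUnion.2 ⟨x, mem_interior_iff_mem_nhds.2 (hKn x)⟩
  obtain ⟨v, hv_open, hv_cov, hv_lf, hv_sub⟩ := precise_refinement _ hu_open hu_cov
  have hv_cpt : ∀ j, IsCompact (closure (v j)) := fun j =>
    (hKc j).of_isClosed_subset isClosed_closure
      (closure_minimal ((hv_sub j).trans interior_subset) (hKc j).isClosed)
  -- finitely many chain components
  have hfin : (range (chainG v)).Finite := by
    by_contra hinf
    rw [← Set.Infinite] at hinf
    let e : ℕ ↪ ↥(range (chainG v)) := hinf.natEmbedding _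
    have h2 : ∀ n : ℕ, ∃ x : X, chainG v x = (e n : Set X) := fun n => (e n).2
    choose xw hxw using h2
    have hdist : ∀ {m n : ℕ}, chainG v (xw m) = chainG v (xw n) → m = n := by
      intro m n h
      apply e.injective
      apply Subtype.ext
      rw [← hxw m, ← hxw n, h]
    set A := ⋃ n, chainG v (xw (2 * n)) with hA
    have hAopen : IsOpen A := isOpen_iUnion fun n => chainG_isOpen hv_open _
    have hAclosed : IsClosed A := by
      rw [← closure_subset_iff_isClosed]
      intro t ht
      rw [mem_closure_iff] at ht
      obtain ⟨z, hz1, hz2⟩ := ht (chainG v t) (chainG_isOpen hv_open t) (chainG_mem hv_cov t)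
      obtain ⟨n, hn⟩ := mem_iUnion.1 hz2
      have h3 : chainG v z = chainG v t := chainG_eq_of_mem hv_cov hz1
      have h4 : chainG v z = chainG v (xw (2 * n)) := chainG_eq_of_mem hv_cov hn
      have : t ∈ chainG v (xw (2 * n)) := by
        rw [← h4, h3]
        exact chainG_mem hv_cov t
      exact mem_iUnion.2 ⟨n, this⟩
    rcases hJ A Aᶜ hAclosed (isClosed_compl_iff.2 hAopen) (union_compl_self A)
      (by rw [inter_compl_self]; exact isCompact_empty) with hAc | hAcc
    · obtain ⟨t, ht⟩ := hAc.elim_finite_subcover (fun n => chainG v (xw (2 * n)))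
        (fun n => chainG_isOpen hv_open _) (by rw [← hA])
      obtain ⟨m, hm⟩ := Infinite.exists_notMem_finset t
      have : xw (2 * m) ∈ A := mem_iUnion.2 ⟨m, chainG_mem hv_cov _⟩
      obtain ⟨n, hnt, hn⟩ := by simpa only [mem_iUnion, exists_prop] using ht this
      have : chainG v (xw (2 * m)) = chainG v (xw (2 * n)) := chainG_eq_of_mem hv_cov hn
      have h2m : 2 * m = 2 * n := hdist this
      have : m = n := by omega
      exact hm (this ▸ hnt)
    · have hcovall : Aᶜ ⊆ ⋃ y : X, chainG v y := fun z _ => mem_iUnion.2 ⟨z, chainG_mem hv_cov z⟩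
      obtain ⟨F, hF⟩ := hAcc.elim_finite_subcover (fun y : X => chainG v y)
        (fun y => chainG_isOpen hv_open y) hcovall
      have hodd : ∀ n : ℕ, xw (2 * n + 1) ∈ Aᶜ := by
        intro n
        rw [mem_compl_iff]
        intro hmem
        obtain ⟨m, hm⟩ := mem_iUnion.1 hmem
        have : chainG v (xw (2 * n + 1)) = chainG v (xw (2 * m)) := chainG_eq_of_mem hv_cov hm
        have := hdist this
        omega
      have hinjodd : Function.Injective (fun n : ℕ => chainG v (xw (2 * n + 1))) := by
        intro m n h
        have := hdist h
        omega
      have hrange : range (fun n : ℕ => chainG v (xw (2 * n + 1))) ⊆ chainG v '' ↑F := by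
        rintro _ ⟨n, rfl⟩
        obtain ⟨y, hyF, hy⟩ := by simpa only [mem_iUnion, exists_prop] using hF (hodd n)
        exact ⟨y, hyF, (chainG_eq_of_mem hv_cov hy).symm⟩
      exact (infinite_range_of_injective hinjodd) ((F.finite_toSet.image _).subset hrange)
  -- conclude σ-compactness
  constructor
  have huniv : (univ : Set X) = ⋃₀ range (chainG v) := by
    apply Subset.antisymm
    · intro x _
      exact ⟨chainG v x, ⟨x, rfl⟩, chainG_mem hv_cov x⟩
    · exact fun x _ => mem_univ x
  rw [huniv]
  refine isSigmaCompact_sUnion _ hfin.countable ?_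
  rintro ⟨S, hS⟩
  obtain ⟨x, rfl⟩ := hS
  exact chainG_sigmaCompact hv_open hv_lf hv_cpt hv_cov x

/-- For a paracompact, locally compact Hausdorff space `X`, the following are equivalent:
(a) `X` is a J-space; (b) every closed map from `X` onto a non-compact, locally compact
Hausdorff space is perfect; (c) every closed map from `X` onto a locally compact
Hausdorff space has at most one non-compact fiber. -/
theorem paracompact_locallyCompact_isJSpace_tfae (X : Type u) [TopologicalSpace X]
    [T2Space X] [ParacompactSpace X] [LocallyCompactSpace X] :
    List.TFAE [
      IsJSpace X,
      ∀ (Y : Type u) [TopologicalSpace Y] [T2Space Y] [LocallyCompactSpace Y],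
        ¬CompactSpace Y → ∀ f : X → Y, Continuous f → Function.Surjective f →
          IsClosedMap f → IsPerfectMap f,
      ∀ (Y : Type u) [TopologicalSpace Y] [T2Space Y] [LocallyCompactSpace Y],
        ∀ f : X → Y, Continuous f → Function.Surjective f → IsClosedMap f →
          ∀ y₁ y₂ : Y, ¬IsCompact (f ⁻¹' {y₁}) → ¬IsCompact (f ⁻¹' {y₂}) → y₁ = y₂] := by
  tfae_have 1 → 3 := by
    intro hJ Y _ _ _ f hf hsurj hcl y₁ y₂ h1 h2
    haveI hsc : SigmaCompactSpace X := hJ.sigmaCompactSpace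
    by_contra hne
    obtain ⟨U, W, hU, hW, hy1U, hy2W, hUW⟩ := t2_separation hne
    obtain ⟨K₀, hK₀, hy1K₀, hK₀U⟩ := exists_compact_subset hU hy1U
    have hNfin : ({y | y ∈ K₀ ∧ ¬IsCompact (f ⁻¹' {y})} \ {y₁}).Finite :=
      (finite_noncompact_fibers hf hcl hK₀).diff (t := {y₁})
    have hFinclosed : IsClosed ({y | y ∈ K₀ ∧ ¬IsCompact (f ⁻¹' {y})} \ {y₁}) :=
      hNfin.isClosed
    have hV₀open : IsOpen (interior K₀ \ ({y | y ∈ K₀ ∧ ¬IsCompact (f ⁻¹' {y})} \ {y₁})) :=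
      isOpen_interior.sdiff hFinclosed
    have hy1V₀ : y₁ ∈ interior K₀ \ ({y | y ∈ K₀ ∧ ¬IsCompact (f ⁻¹' {y})} \ {y₁}) :=
      ⟨hy1K₀, fun h => h.2 rfl⟩
    obtain ⟨K₁, hK₁, hy1K₁, hK₁V₀⟩ := exists_compact_subset hV₀open hy1V₀
    have hAcl : IsClosed (f ⁻¹' K₁) := hK₁.isClosed.preimage hf
    have hBcl : IsClosed (f ⁻¹' (interior K₁)ᶜ) :=
      (isOpen_interior.isClosed_compl).preimage hf
    have hunion : f ⁻¹' K₁ ∪ f ⁻¹' (interior K₁)ᶜ = univ := by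
      rw [eq_univ_iff_forall]
      intro x
      by_cases h : f x ∈ interior K₁
      · exact Or.inl (mem_preimage.2 (interior_subset h))
      · exact Or.inr h
    have hintereq : f ⁻¹' K₁ ∩ f ⁻¹' (interior K₁)ᶜ = f ⁻¹' (K₁ \ interior K₁) := by
      rw [← preimage_inter]; rfl
    have hD : IsCompact (K₁ \ interior K₁) := hK₁.diff isOpen_interior
    have hfibD : ∀ y ∈ K₁ \ interior K₁, IsCompact (f ⁻¹' {y}) := by
      intro d hd
      by_contra hnc
      have hdK₀ : d ∈ K₀ := interior_subset (hK₁V₀ hd.1).1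
      have hdnotFin := (hK₁V₀ hd.1).2
      by_cases hdy : d = y₁
      · exact hd.2 (hdy ▸ hy1K₁)
      · exact hdnotFin ⟨⟨hdK₀, hnc⟩, hdy⟩
    have hABcpt : IsCompact (f ⁻¹' K₁ ∩ f ⁻¹' (interior K₁)ᶜ) := by
      rw [hintereq]
      exact isCompact_preimage_of_closedMap hcl hD hfibD
    rcases hJ _ _ hAcl hBcl hunion hABcpt with hc | hc
    · refine h1 (hc.of_isClosed_subset (isClosed_singleton.preimage hf) ?_)
      intro x hx
      rw [mem_preimage, mem_singleton_iff] at hx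
      rw [mem_preimage, hx]
      exact interior_subset hy1K₁
    · refine h2 (hc.of_isClosed_subset (isClosed_singleton.preimage hf) ?_)
      intro x hx
      rw [mem_preimage, mem_singleton_iff] at hx
      rw [mem_preimage, hx, mem_compl_iff]
      intro hy2
      have hy2U : y₂ ∈ U := hK₀U (interior_subset ((hK₁V₀ (interior_subset hy2)).1))
      exact hUW.ne_of_mem hy2U hy2W rfl
  tfae_have 3 → 2 := by
    intro h3 Y _ _ _ hYnc f hf hsurj hcl
    refine ⟨hcl, fun y₀ => ?_⟩
    by_contra hnc
    obtain ⟨C, hC, hCn⟩ := exists_compact_mem_nhds y₀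
    have hA₀closed : IsClosed (interior C)ᶜ := isOpen_interior.isClosed_compl
    have hsubAC : (univ : Set Y) ⊆ (interior C)ᶜ ∪ C := by
      intro y _
      by_cases h : y ∈ interior C
      · exact Or.inr (interior_subset h)
      · exact Or.inl h
    haveI hT2 : T2Space (CollapseSpace (interior C)ᶜ) := collapse_t2 _ hA₀closed
    haveI hWLC : WeaklyLocallyCompactSpace (CollapseSpace (interior C)ᶜ) :=
      collapse_wlc _ hA₀closed hC isOpen_univ (subset_univ _) hsubAC
    haveI hLC : LocallyCompactSpace (CollapseSpace (interior C)ᶜ) := inferInstance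
    have hA₀ne : ((interior C)ᶜ : Set Y).Nonempty := by
      rw [nonempty_iff_ne_empty]
      intro h0
      apply hYnc
      rw [← isCompact_univ_iff]
      have h1 : interior C = univ := by rwa [compl_empty_iff] at h0
      have h2 : C = univ := eq_univ_of_univ_subset (h1 ▸ interior_subset)
      exact h2 ▸ hC
    obtain ⟨a, ha⟩ := hA₀ne
    have hy₀ : y₀ ∉ ((interior C)ᶜ : Set Y) := by
      rw [mem_compl_iff, not_not]
      exact mem_interior_iff_mem_nhds.2 hCn
    have hfib1 : (cq (interior C)ᶜ ∘ f) ⁻¹' {cq (interior C)ᶜ y₀} = f ⁻¹' {y₀} := by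
      rw [preimage_comp, cq_fiber_of_not_mem _ hy₀]
    have hfib2 : (cq (interior C)ᶜ ∘ f) ⁻¹' {cq (interior C)ᶜ a} = f ⁻¹' (interior C)ᶜ := by
      rw [preimage_comp, cq_fiber_of_mem _ ha]
    have hnc2 : ¬IsCompact (f ⁻¹' ((interior C)ᶜ : Set Y)) := by
      intro hcc
      apply hYnc
      rw [← isCompact_univ_iff]
      have himg : IsCompact (f '' (f ⁻¹' ((interior C)ᶜ : Set Y))) := hcc.image hf
      rw [image_preimage_eq _ hsurj] at himg
      have : (univ : Set Y) = (interior C)ᶜ ∪ C := Subset.antisymm hsubAC (subset_univ _)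
      exact this ▸ (himg.union hC)
    have heq := h3 (CollapseSpace (interior C)ᶜ) (cq (interior C)ᶜ ∘ f)
      ((cq_continuous _).comp hf) ((cq_surjective _).comp hsurj)
      ((cq_isClosedMap _ hA₀closed).comp hcl)
      (cq (interior C)ᶜ y₀) (cq (interior C)ᶜ a)
      (by rw [hfib1]; exact hnc) (by rw [hfib2]; exact hnc2)
    exact (cq_ne _ ha hy₀) heq.symm
  tfae_have 2 → 1 := by
    intro h2 A B hAcl hBcl hunion hABcpt
    by_contra hnot
    rw [not_or] at hnot
    obtain ⟨hA, hB⟩ := hnot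
    obtain ⟨M, hM, hKM⟩ := exists_compact_superset hABcpt
    have hOopen : IsOpen (Bᶜ ∪ interior M) := hBcl.isOpen_compl.union isOpen_interior
    have hAO : A ⊆ Bᶜ ∪ interior M := by
      intro x hx
      by_cases hb : x ∈ B
      · exact Or.inr (hKM ⟨hx, hb⟩)
      · exact Or.inl hb
    have hOM : Bᶜ ∪ interior M ⊆ A ∪ M := by
      rintro x (hx | hx)
      · rcases (eq_univ_iff_forall.1 hunion x) with h | h
        · exact Or.inl h
        · exact absurd h hx
      · exact Or.inr (interior_subset hx)
    haveI hT2 : T2Space (CollapseSpace A) := collapse_t2 A hAcl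
    haveI hWLC : WeaklyLocallyCompactSpace (CollapseSpace A) :=
      collapse_wlc A hAcl hM hOopen hAO hOM
    haveI hLC : LocallyCompactSpace (CollapseSpace A) := inferInstance
    have hnc : ¬CompactSpace (CollapseSpace A) := by
      intro hc
      have hScl : IsClosed (B ∩ (interior M)ᶜ) := hBcl.inter isOpen_interior.isClosed_compl
      have hSA : (B ∩ (interior M)ᶜ) ∩ A = ∅ := by
        rw [eq_empty_iff_forall_notMem]
        rintro x ⟨⟨hxB, hxM⟩, hxA⟩
        exact hxM (hKM ⟨hxA, hxB⟩)
      have himg : IsClosed (cq A '' (B ∩ (interior M)ᶜ)) := cq_isClosedMap A hAcl _ hScl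
      have hSc : IsCompact (B ∩ (interior M)ᶜ) :=
        collapse_isCompact_of_image A hAcl hSA himg.isCompact
      have hBsub : B ⊆ (B ∩ (interior M)ᶜ) ∪ M := by
        intro b hb
        by_cases h : b ∈ interior M
        · exact Or.inr (interior_subset h)
        · exact Or.inl ⟨hb, h⟩
      exact hB ((hSc.union hM).of_isClosed_subset hBcl hBsub)
    have hperf := h2 (CollapseSpace A) hnc (cq A) (cq_continuous A) (cq_surjective A)
      (cq_isClosedMap A hAcl)
    obtain ⟨a, ha⟩ : A.Nonempty := by
      rw [nonempty_iff_ne_empty]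
      intro h0
      exact hA (h0 ▸ isCompact_empty)
    have hfib := hperf.2 (cq A a)
    rw [cq_fiber_of_mem A ha] at hfib
    exact hA hfib
  tfae_finish
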